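/- Consider the continual-observation mechanism on data streams (x_1,...,x_N) with x_i ∈ [0,1]: for each t ∈ [N] it releases ŝ_t = Σ_{i=1}^t x_i + Σ_{l=0}^L η_{⌈t/2^l⌉,l}, where L = ⌈log₂ N⌉ and the η_{j,l} are independent mean-zero Laplace random variables with scale ⌈(L+1)/2⌉/ε. If two streams differ in at most one time step, this mechanism is ε-differentially private. -/

import Mathlib

open MeasureTheory ProbabilityTheory Finset
open scoped ENNReal NNReal

/-- the mean-zero Laplace distribution with scale `b`, given by its density -/
noncomputable def laplaceMeasure (b : ℝ) : Measure ℝ :=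
  volume.withDensity (fun x => ENNReal.ofReal ((1 / (2 * b)) * Real.exp (-|x| / b)))

/-- continual-observation mechanism: for each time `t ∈ [N]` (1-indexed `t = t.val + 1`)
release the partial sum `Σ_{i=1}^t x_i` plus `Σ_{l=0}^L η_{⌈t/2^l⌉,l}`. -/
noncomputable def contMechanism {Ω : Type*} (N L : ℕ) (x : Fin N → ℝ)
    (η : ℕ × ℕ → Ω → ℝ) (ω : Ω) : Fin N → ℝ :=
  fun t => (∑ i ∈ Finset.univ.filter (fun i : Fin N => i ≤ t), x i) +
    ∑ l ∈ Finset.range (L + 1), η ((((t : ℕ) + 1) + 2 ^ l - 1) / 2 ^ l, l) ω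

/-- floor-style decomposition of the suffix indicator -/
lemma floorId : ∀ (L t m : ℕ), m < 2^L → t < 2^L →
    ((if m ≤ t then (1:ℝ) else 0)
      = 1 - ∑ l ∈ Finset.range L,
          if (m/2^l % 2 = 1 ∧ t/2^l + 1 = m/2^l) then (1:ℝ) else 0) := by
  intro L
  induction L with
  | zero =>
    intro t m hm ht
    interval_cases t <;> interval_cases m <;> simp
  | succ L ih =>
    intro t m hm ht
    rw [Finset.sum_range_succ']
    have hrw : ∀ l ∈ Finset.range L,
        (if (m/2^(l+1) % 2 = 1 ∧ t/2^(l+1) + 1 = m/2^(l+1)) then (1:ℝ) else 0)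
        = (if ((m/2)/2^l % 2 = 1 ∧ (t/2)/2^l + 1 = (m/2)/2^l) then (1:ℝ) else 0) := by
      intro l _
      have h1 : m/2^(l+1) = (m/2)/2^l := by
        rw [Nat.div_div_eq_div_mul, pow_succ']
      have h2 : t/2^(l+1) = (t/2)/2^l := by
        rw [Nat.div_div_eq_div_mul, pow_succ']
      rw [h1, h2]
    rw [Finset.sum_congr rfl hrw]
    have hm2 : m/2 < 2^L := by
      rw [Nat.div_lt_iff_lt_mul two_pos]
      calc m < 2^(L+1) := hm
        _ = 2^L * 2 := by rw [pow_succ]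
    have ht2 : t/2 < 2^L := by
      rw [Nat.div_lt_iff_lt_mul two_pos]
      calc t < 2^(L+1) := ht
        _ = 2^L * 2 := by rw [pow_succ]
    have := ih (t/2) (m/2) hm2 ht2
    have hkey : (if m ≤ t then (1:ℝ) else 0)
        = (if m/2 ≤ t/2 then (1:ℝ) else 0)
          - (if (m/2^0 % 2 = 1 ∧ t/2^0 + 1 = m/2^0) then (1:ℝ) else 0) := by
      simp only [pow_zero, Nat.div_one]
      split_ifs <;> (try norm_num) <;> omega
    rw [hkey, this]
    ring

/-- ceiling-style decomposition of the suffix indicator (`u = m - 1`) -/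
lemma ceilId : ∀ (L t u : ℕ), t < 2^L →
    ((if u < t then (1:ℝ) else 0)
      = ∑ l ∈ Finset.range L,
          if ((u/2^l + 1) % 2 = 1 ∧ t/2^l + 1 = u/2^l + 2) then (1:ℝ) else 0) := by
  intro L
  induction L with
  | zero =>
    intro t u ht
    interval_cases t
    simp
  | succ L ih =>
    intro t u ht
    rw [Finset.sum_range_succ']
    have hrw : ∀ l ∈ Finset.range L,
        (if ((u/2^(l+1) + 1) % 2 = 1 ∧ t/2^(l+1) + 1 = u/2^(l+1) + 2) then (1:ℝ) else 0)
        = (if (((u/2)/2^l + 1) % 2 = 1 ∧ (t/2)/2^l + 1 = (u/2)/2^l + 2) then (1:ℝ) else 0) := by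
      intro l _
      have h1 : u/2^(l+1) = (u/2)/2^l := by rw [Nat.div_div_eq_div_mul, pow_succ']
      have h2 : t/2^(l+1) = (t/2)/2^l := by rw [Nat.div_div_eq_div_mul, pow_succ']
      rw [h1, h2]
    rw [Finset.sum_congr rfl hrw]
    have ht2 : t/2 < 2^L := by
      rw [Nat.div_lt_iff_lt_mul two_pos]
      calc t < 2^(L+1) := ht
        _ = 2^L * 2 := by rw [pow_succ]
    rw [← ih (t/2) (u/2) ht2]
    have hkey : (if u < t then (1:ℝ) else 0)
        = (if u/2 < t/2 then (1:ℝ) else 0)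
          + (if ((u/2^0 + 1) % 2 = 1 ∧ t/2^0 + 1 = u/2^0 + 2) then (1:ℝ) else 0) := by
      simp only [pow_zero, Nat.div_one]
      split_ifs <;> (try norm_num) <;> omega
    rw [hkey]

lemma pred_div_pow_dvd (m l : ℕ) (hm : 1 ≤ m) (h : 2^l ∣ m) :
    (m-1)/2^l = m/2^l - 1 := by
  obtain ⟨k, hk⟩ := h
  have hd : 0 < 2^l := pow_pos two_pos l
  obtain ⟨k', rfl⟩ : ∃ k', k = k' + 1 := by
    refine ⟨k - 1, ?_⟩
    rcases Nat.eq_zero_or_pos k with h0 | h1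
    · rw [h0, mul_zero] at hk; omega
    · omega
  have hk' : m = 2^l + 2^l * k' := by rw [hk, mul_add, mul_one, add_comm]
  have h1 : m - 1 = (2^l - 1) + 2^l * k' := by omega
  rw [h1, Nat.add_mul_div_left _ _ hd, Nat.div_eq_of_lt (by omega), hk,
    Nat.mul_div_cancel_left _ hd]
  omega

lemma pred_div_pow_not_dvd (m l : ℕ) (hm : 1 ≤ m) (h : ¬ 2^l ∣ m) :
    (m-1)/2^l = m/2^l := by
  have hd : 0 < 2^l := pow_pos two_pos l
  have hmod := Nat.div_add_mod m (2^l)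
  have hs : 1 ≤ m % 2^l := by
    rcases Nat.eq_zero_or_pos (m % 2^l) with h0 | h1
    · exact absurd (Nat.dvd_iff_mod_eq_zero.mpr h0) h
    · exact h1
  have h1 : m - 1 = (m % 2^l - 1) + 2^l * (m / 2^l) := by omega
  rw [h1, Nat.add_mul_div_left _ _ hd, Nat.div_eq_of_lt
    (by have := Nat.mod_lt m hd; omega)]
  omega

lemma both_odd_dvd (m l : ℕ) (hm : 1 ≤ m) (h1 : m/2^l % 2 = 1)
    (h2 : ((m-1)/2^l + 1) % 2 = 1) : 2^l ∣ m := by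
  by_contra h
  rw [pred_div_pow_not_dvd m l hm h] at h2
  omega

lemma count_bound (L m : ℕ) (hm : 1 ≤ m) :
    ((Finset.range L).filter (fun l => m/2^l % 2 = 1)).card
      + ((Finset.range L).filter (fun l => ((m-1)/2^l + 1) % 2 = 1)).card ≤ L + 1 := by
  set A := (Finset.range L).filter (fun l => m/2^l % 2 = 1) with hA
  set B := (Finset.range L).filter (fun l => ((m-1)/2^l + 1) % 2 = 1) with hB
  rw [← Finset.card_union_add_card_inter]
  have h1 : (A ∪ B).card ≤ L := by
    calc (A ∪ B).card ≤ (Finset.range L).card := by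
          apply Finset.card_le_card
          intro l hl
          rcases Finset.mem_union.mp hl with h | h
          · exact (Finset.mem_filter.mp h).1
          · exact (Finset.mem_filter.mp h).1
      _ = L := Finset.card_range L
  have key : ∀ l1 l2 : ℕ, l1 < l2 → 2^l1 ∣ m → 2^l2 ∣ m → m/2^l1 % 2 = 1 → False := by
    intro l1 l2 hlt hd1 hd2 hodd
    obtain ⟨k, hk⟩ := hd2
    have : m / 2^l1 = 2^(l2-l1) * k := by
      rw [hk]
      have h2 : (2:ℕ)^l2 = 2^l1 * 2^(l2-l1) := by
        rw [← pow_add]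
        congr 1
        omega
      rw [h2, mul_assoc, Nat.mul_div_cancel_left _ (pow_pos two_pos l1)]
    have heven : 2 ∣ 2^(l2-l1) := dvd_pow_self 2 (by omega : l2 - l1 ≠ 0)
    obtain ⟨r, hr⟩ := heven
    rw [this, hr, mul_assoc, Nat.mul_mod_right] at hodd
    omega
  have h2 : (A ∩ B).card ≤ 1 := by
    apply Finset.card_le_one.mpr
    intro a ha b hb
    have hma : m/2^a % 2 = 1 := (Finset.mem_filter.mp (Finset.mem_inter.mp ha).1).2
    have hmb : m/2^b % 2 = 1 := (Finset.mem_filter.mp (Finset.mem_inter.mp hb).1).2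
    have hda : 2^a ∣ m := both_odd_dvd m a hm hma
      (Finset.mem_filter.mp (Finset.mem_inter.mp ha).2).2
    have hdb : 2^b ∣ m := both_odd_dvd m b hm hmb
      (Finset.mem_filter.mp (Finset.mem_inter.mp hb).2).2
    rcases lt_trichotomy a b with h | h | h
    · exact absurd (key a b h hda hdb hma) (fun x => x)
    · exact h
    · exact absurd (key b a h hdb hda hmb) (fun x => x)
  exact add_le_add h1 h2

lemma dyadic_decomp (L m : ℕ) (c : ℝ) (hm : m < 2^L) :
    ∃ (v : ℕ × ℕ → ℝ) (w : ℕ → ℕ),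
      (∀ t, t < 2^L →
        ∑ l ∈ Finset.range (L+1), v (t/2^l + 1, l) = if m ≤ t then c else 0) ∧
      (∀ j l, v (j, l) ≠ 0 → j = w l) ∧
      (∑ l ∈ Finset.range (L+1), |v (w l, l)| ≤ (((L+2)/2 : ℕ) : ℝ) * |c|) := by
  have hK : 1 ≤ (L+2)/2 := by omega
  have hKR : (1:ℝ) ≤ (((L+2)/2 : ℕ) : ℝ) := by exact_mod_cast hK
  rcases Nat.eq_zero_or_pos m with hm0 | hm1
  · -- m = 0 : only the top node
    subst hm0
    refine ⟨fun p => if p = (1, L) then c else 0, fun _ => 1, ?_, ?_, ?_⟩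
    · intro t ht
      have htop : t / 2^L = 0 := Nat.div_eq_of_lt ht
      rw [Finset.sum_eq_single L]
      · beta_reduce
        rw [htop, if_pos rfl, if_pos (Nat.zero_le t)]
      · intro l hl hne
        beta_reduce
        exact if_neg (by simp [Prod.ext_iff, hne])
      · intro h
        exact absurd (Finset.self_mem_range_succ L) h
    · intro j l hv
      by_contra hj
      apply hv
      beta_reduce
      apply if_neg
      simp only [Prod.ext_iff]
      intro h
      exact hj h.1
    · rw [Finset.sum_eq_single L]
      · beta_reduce
        rw [if_pos rfl]
        exact le_mul_of_one_le_left (abs_nonneg c) hKR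
      · intro l hl hne
        beta_reduce
        rw [if_neg (by simp [Prod.ext_iff, hne]), abs_zero]
      · intro h
        exact absurd (Finset.self_mem_range_succ L) h
  · by_cases hcase :
      ((Finset.range L).filter (fun l => m/2^l % 2 = 1)).card + 1 ≤ (L+2)/2
    · -- floor strategy
      refine ⟨fun p => if p = (1, L) then c else
          if (p.2 < L ∧ m/2^p.2 % 2 = 1 ∧ p.1 = m/2^p.2) then -c else 0,
        fun l => if l = L then 1 else m/2^l, ?_, ?_, ?_⟩
      · intro t ht
        have htop : t / 2^L = 0 := Nat.div_eq_of_lt ht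
        rw [Finset.sum_range_succ]
        have hlast : (if ((t/2^L + 1 : ℕ), L) = ((1 : ℕ), L) then c else
            if (L < L ∧ m/2^L % 2 = 1 ∧ t/2^L + 1 = m/2^L) then -c else 0) = c := by
          rw [htop, if_pos rfl]
        beta_reduce
        rw [hlast]
        have hterm : ∀ l ∈ Finset.range L,
            (if ((t/2^l + 1 : ℕ), l) = ((1 : ℕ), L) then c else
              if (l < L ∧ m/2^l % 2 = 1 ∧ t/2^l + 1 = m/2^l) then -c else 0)
            = c * -(if (m/2^l % 2 = 1 ∧ t/2^l + 1 = m/2^l) then (1:ℝ) else 0) := by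
          intro l hl
          have hlL : l < L := Finset.mem_range.mp hl
          rw [if_neg (by simp only [Prod.ext_iff]; intro h; omega)]
          by_cases hc : (m/2^l % 2 = 1 ∧ t/2^l + 1 = m/2^l)
          · rw [if_pos ⟨hlL, hc.1, hc.2⟩, if_pos hc]; ring
          · rw [if_neg (by tauto), if_neg hc]; ring
        rw [Finset.sum_congr rfl hterm, ← Finset.mul_sum]
        have hid := floorId L t m hm ht
        have hs : ∑ l ∈ Finset.range L,
            -(if (m/2^l % 2 = 1 ∧ t/2^l + 1 = m/2^l) then (1:ℝ) else 0)
            = -(∑ l ∈ Finset.range L,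
              (if (m/2^l % 2 = 1 ∧ t/2^l + 1 = m/2^l) then (1:ℝ) else 0)) := by
          rw [Finset.sum_neg_distrib]
        rw [hs]
        have h2 : ∑ l ∈ Finset.range L,
            (if (m/2^l % 2 = 1 ∧ t/2^l + 1 = m/2^l) then (1:ℝ) else 0)
            = 1 - (if m ≤ t then (1:ℝ) else 0) := by linarith [hid]
        rw [h2]
        split_ifs <;> ring
      · intro j l hv
        beta_reduce at hv ⊢
        by_cases hl : l = L
        · subst hl
          by_contra hj
          beta_reduce at hj
          rw [if_pos rfl] at hj
          apply hv
          rw [if_neg (by simp only [Prod.ext_iff]; intro h; exact absurd h.1 hj),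
            if_neg (by omega)]
        · by_contra hj
          beta_reduce at hj
          apply hv
          rw [if_neg (by simp only [Prod.ext_iff]; intro h; exact absurd h.2 hl)]
          apply if_neg
          intro h
          rw [if_neg hl] at hj
          exact hj h.2.2
      · rw [Finset.sum_range_succ]
        beta_reduce
        have hlastw : (if (L : ℕ) = L then (1:ℕ) else m/2^L) = 1 := if_pos rfl
        rw [hlastw, if_pos rfl]
        have hterm : ∀ l ∈ Finset.range L,
            |(if ((if l = L then (1:ℕ) else m/2^l), l) = ((1:ℕ), L) then c else
              if (l < L ∧ m/2^l % 2 = 1 ∧ (if l = L then (1:ℕ) else m/2^l) = m/2^l)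
                then -c else 0)|
            = (if m/2^l % 2 = 1 then |c| else 0) := by
          intro l hl
          have hlL : l < L := Finset.mem_range.mp hl
          rw [if_neg (by omega : ¬ l = L),
            if_neg (by simp only [Prod.ext_iff]; intro h; omega)]
          by_cases hc : m/2^l % 2 = 1
          · rw [if_pos ⟨hlL, hc, rfl⟩, if_pos hc, abs_neg]
          · rw [if_neg (by tauto), if_neg hc, abs_zero]
        rw [Finset.sum_congr rfl hterm, ← Finset.sum_filter, Finset.sum_const,
          nsmul_eq_mul]
        have hcast : ((((Finset.range L).filter (fun l => m/2^l % 2 = 1)).card : ℝ) + 1)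
            ≤ (((L+2)/2 : ℕ) : ℝ) := by exact_mod_cast hcase
        nlinarith [abs_nonneg c]
    · -- ceil strategy
      have hcnt := count_bound L m hm1
      have hc2 : ((Finset.range L).filter
          (fun l => ((m-1)/2^l + 1) % 2 = 1)).card ≤ (L+2)/2 := by omega
      refine ⟨fun p => if (p.2 < L ∧ ((m-1)/2^p.2 + 1) % 2 = 1 ∧ p.1 = (m-1)/2^p.2 + 2)
          then c else 0,
        fun l => (m-1)/2^l + 2, ?_, ?_, ?_⟩
      · intro t ht
        rw [Finset.sum_range_succ]
        beta_reduce
        rw [if_neg (by omega)]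
        have hterm : ∀ l ∈ Finset.range L,
            (if (l < L ∧ ((m-1)/2^l + 1) % 2 = 1 ∧ t/2^l + 1 = (m-1)/2^l + 2)
              then c else 0)
            = c * (if (((m-1)/2^l + 1) % 2 = 1 ∧ t/2^l + 1 = (m-1)/2^l + 2)
              then (1:ℝ) else 0) := by
          intro l hl
          have hlL : l < L := Finset.mem_range.mp hl
          by_cases hc : (((m-1)/2^l + 1) % 2 = 1 ∧ t/2^l + 1 = (m-1)/2^l + 2)
          · rw [if_pos ⟨hlL, hc.1, hc.2⟩, if_pos hc]; ring
          · rw [if_neg (by tauto), if_neg hc]; ring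
        rw [Finset.sum_congr rfl hterm, ← Finset.mul_sum, ← ceilId L t (m-1) ht]
        have : (if m - 1 < t then (1:ℝ) else 0) = (if m ≤ t then (1:ℝ) else 0) := by
          split_ifs with h1 h2 <;> first | rfl | omega
        rw [this]
        split_ifs <;> ring
      · intro j l hv
        beta_reduce at hv
        by_contra hj
        beta_reduce at hj
        apply hv
        apply if_neg
        intro h
        exact hj h.2.2
      · rw [Finset.sum_range_succ]
        beta_reduce
        rw [if_neg (by omega), abs_zero, add_zero]
        have hterm : ∀ l ∈ Finset.range L,
            |(if (l < L ∧ ((m-1)/2^l + 1) % 2 = 1 ∧ (m-1)/2^l + 2 = (m-1)/2^l + 2)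
              then c else 0)|
            = (if ((m-1)/2^l + 1) % 2 = 1 then |c| else 0) := by
          intro l hl
          have hlL : l < L := Finset.mem_range.mp hl
          by_cases hc : ((m-1)/2^l + 1) % 2 = 1
          · rw [if_pos ⟨hlL, hc, rfl⟩, if_pos hc]
          · rw [if_neg (by tauto), if_neg hc, abs_zero]
        rw [Finset.sum_congr rfl hterm, ← Finset.sum_filter, Finset.sum_const,
          nsmul_eq_mul]
        have hcast : ((((Finset.range L).filter
            (fun l => ((m-1)/2^l + 1) % 2 = 1)).card : ℝ)) ≤ (((L+2)/2 : ℕ) : ℝ) := by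
          exact_mod_cast hc2
        nlinarith [abs_nonneg c]

lemma lapDen_measurable (b : ℝ) :
    Measurable (fun x : ℝ => ENNReal.ofReal ((1 / (2 * b)) * Real.exp (-|x| / b))) := by
  measurability

/-- product of lintegrals over a finite product measure -/
lemma lintegral_pi_prod {ι : Type*} [Fintype ι] [DecidableEq ι] (μ : Measure ℝ)
    [SigmaFinite μ] (g : ι → ℝ → ℝ≥0∞) (hg : ∀ i, Measurable (g i)) :
    ∫⁻ y, ∏ i, g i (y i) ∂(Measure.pi fun _ : ι => μ) = ∏ i, ∫⁻ t, g i t ∂μ := by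
  have hprodmeas : Measurable (fun y : ι → ℝ => ∏ i, g i (y i)) :=
    Finset.measurable_prod _ (fun i _ => (hg i).comp (measurable_pi_apply i))
  have key : ∀ s : Finset ι, ∀ x : ι → ℝ,
      (∫⋯∫⁻_s, (fun y => ∏ i, g i (y i)) ∂(fun _ => μ)) x
        = (∏ i ∈ s, ∫⁻ t, g i t ∂μ) * ∏ i ∈ sᶜ, g i (x i) := by
    intro s
    induction s using Finset.induction_on with
    | empty =>
      intro x
      rw [MeasureTheory.lmarginal_empty]
      simp [Finset.compl_empty]
    | @insert i s hi ih =>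
      intro x
      rw [MeasureTheory.lmarginal_insert _ hprodmeas hi]
      have hstep : ∀ t : ℝ,
          (∫⋯∫⁻_s, (fun y => ∏ i, g i (y i)) ∂(fun _ => μ)) (Function.update x i t)
          = ((∏ j ∈ s, ∫⁻ u, g j u ∂μ) * ∏ j ∈ sᶜ.erase i, g j (x j)) * g i t := by
        intro t
        rw [ih (Function.update x i t)]
        have himem : i ∈ sᶜ := Finset.mem_compl.mpr hi
        rw [← Finset.mul_prod_erase _ _ himem]
        have : ∀ j ∈ sᶜ.erase i, g j (Function.update x i t j) = g j (x j) := by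
          intro j hj
          rw [Function.update_of_ne (Finset.ne_of_mem_erase hj)]
        rw [Finset.prod_congr rfl this, Function.update_self]
        ring
      simp_rw [hstep]
      rw [lintegral_const_mul _ (hg i), Finset.prod_insert hi, Finset.compl_insert]
      ring
  rw [MeasureTheory.lintegral_eq_lmarginal_univ (fun _ => (0:ℝ)), key Finset.univ]
  simp

lemma pi_withDensity {ι : Type*} [Fintype ι] (f : ℝ → ℝ≥0∞) (hf : Measurable f)
    [SigmaFinite ((volume : Measure ℝ).withDensity f)] :
    Measure.pi (fun _ : ι => (volume : Measure ℝ).withDensity f)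
      = (volume : Measure (ι → ℝ)).withDensity (fun y => ∏ i, f (y i)) := by
  classical
  refine Measure.pi_eq (fun s hs => ?_)
  rw [withDensity_apply _ (MeasurableSet.univ_pi hs)]
  have h1 : ∫⁻ y in Set.pi Set.univ s, ∏ i, f (y i) ∂(volume : Measure (ι → ℝ))
      = ∫⁻ y, ∏ i, ((s i).indicator f) (y i) ∂(volume : Measure (ι → ℝ)) := by
    rw [← lintegral_indicator (MeasurableSet.univ_pi hs)]
    refine lintegral_congr fun y => ?_
    by_cases hy : y ∈ Set.pi Set.univ s
    · rw [Set.indicator_of_mem hy]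
      exact Finset.prod_congr rfl fun i _ =>
        (Set.indicator_of_mem (hy i (Set.mem_univ i)) f).symm
    · rw [Set.indicator_of_notMem hy]
      rw [Set.mem_univ_pi] at hy
      push_neg at hy
      obtain ⟨i, hi⟩ := hy
      exact (Finset.prod_eq_zero (Finset.mem_univ i)
        (Set.indicator_of_notMem hi f)).symm
  rw [h1]
  have h2 : (volume : Measure (ι → ℝ)) = Measure.pi (fun _ : ι => (volume : Measure ℝ)) :=
    volume_pi
  rw [h2, lintegral_pi_prod _ _ (fun i => hf.indicator (hs i))]
  exact Finset.prod_congr rfl fun i _ => by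
    rw [lintegral_indicator (hs i), withDensity_apply _ (hs i)]

lemma prod_ofReal_exp {ι : Type*} (s : Finset ι) (a : ι → ℝ) :
    ∏ i ∈ s, ENNReal.ofReal (Real.exp (a i))
      = ENNReal.ofReal (Real.exp (∑ i ∈ s, a i)) := by
  classical
  induction s using Finset.induction_on with
  | empty => simp
  | @insert i s hi ih =>
    rw [Finset.prod_insert hi, Finset.sum_insert hi, ih,
      ← ENNReal.ofReal_mul (Real.exp_nonneg _), ← Real.exp_add]

lemma lap_den_shift {b : ℝ} (hb : 0 < b) (a x : ℝ) :
    ENNReal.ofReal ((1 / (2 * b)) * Real.exp (-|x - a| / b))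
      ≤ ENNReal.ofReal (Real.exp (|a| / b))
        * ENNReal.ofReal ((1 / (2 * b)) * Real.exp (-|x| / b)) := by
  rw [← ENNReal.ofReal_mul (Real.exp_nonneg _)]
  apply ENNReal.ofReal_le_ofReal
  have h1 : |x| - |a| ≤ |x - a| := abs_sub_abs_le_abs_sub x a
  have h2 : -|x - a| / b ≤ (|a| - |x|) / b := by
    apply (div_le_div_iff_of_pos_right hb).mpr
    linarith
  calc (1 / (2*b)) * Real.exp (-|x - a| / b)
      ≤ (1 / (2*b)) * Real.exp ((|a| - |x|) / b) := by
        apply mul_le_mul_of_nonneg_left (Real.exp_le_exp.mpr h2) (by positivity)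
    _ = Real.exp (|a| / b) * ((1 / (2*b)) * Real.exp (-|x| / b)) := by
        have h3 : (|a| - |x|) / b = |a| / b + (-|x| / b) := by ring
        rw [h3, Real.exp_add]
        ring

lemma pi_laplace_shift {ι : Type*} [Fintype ι] {b : ℝ} (hb : 0 < b)
    [IsProbabilityMeasure (laplaceMeasure b)] (v : ι → ℝ) {T : Set (ι → ℝ)}
    (hT : MeasurableSet T) :
    Measure.pi (fun _ : ι => laplaceMeasure b) ((fun y => y + v) ⁻¹' T)
      ≤ ENNReal.ofReal (Real.exp ((∑ i, |v i|) / b))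
        * Measure.pi (fun _ : ι => laplaceMeasure b) T := by
  classical
  set f : ℝ → ℝ≥0∞ := fun x => ENNReal.ofReal ((1 / (2 * b)) * Real.exp (-|x| / b))
    with hfdef
  have hlapf : laplaceMeasure b = (volume : Measure ℝ).withDensity f := rfl
  have hf : Measurable f := lapDen_measurable b
  have hSF : SigmaFinite ((volume : Measure ℝ).withDensity f) := by
    rw [← hlapf]; infer_instance
  have hpi : Measure.pi (fun _ : ι => laplaceMeasure b)
      = (volume : Measure (ι → ℝ)).withDensity (fun y => ∏ i, f (y i)) := by
    rw [hlapf]; exact pi_withDensity f hf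
  set ρ : (ι → ℝ) → ℝ≥0∞ := fun y => ∏ i, f (y i) with hρdef
  have hρ : Measurable ρ :=
    Finset.measurable_prod _ fun i _ => hf.comp (measurable_pi_apply i)
  have hτ : Measurable (fun y : ι → ℝ => y + v) :=
    measurable_id.add_const v
  have hmp : MeasurePreserving (fun y : ι → ℝ => y + v) volume volume :=
    measurePreserving_add_right volume v
  have hρsub : Measurable (fun y : ι → ℝ => ρ (y - v)) :=
    hρ.comp (measurable_id.sub_const v)
  set C : ℝ≥0∞ := ENNReal.ofReal (Real.exp ((∑ i, |v i|) / b)) with hCdef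
  have hpt : ∀ y : ι → ℝ, ρ (y - v) ≤ C * ρ y := by
    intro y
    have hstep : ∀ i : ι, f (y i - v i)
        ≤ ENNReal.ofReal (Real.exp (|v i| / b)) * f (y i) := fun i =>
      lap_den_shift hb (v i) (y i)
    calc ρ (y - v) = ∏ i, f (y i - v i) := rfl
      _ ≤ ∏ i, (ENNReal.ofReal (Real.exp (|v i| / b)) * f (y i)) :=
          Finset.prod_le_prod' fun i _ => hstep i
      _ = (∏ i, ENNReal.ofReal (Real.exp (|v i| / b))) * ∏ i, f (y i) := by
          rw [Finset.prod_mul_distrib]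
      _ = C * ρ y := by
          rw [prod_ofReal_exp, hCdef, ← Finset.sum_div]
  calc Measure.pi (fun _ : ι => laplaceMeasure b) ((fun y => y + v) ⁻¹' T)
      = ∫⁻ y in (fun y => y + v) ⁻¹' T, ρ y ∂volume := by
        rw [hpi, withDensity_apply _ (hT.preimage hτ)]
    _ = ∫⁻ y in T, ρ (y - v) ∂volume := by
        have := setLIntegral_map (μ := (volume : Measure (ι → ℝ))) hT hρsub hτ
        rw [hmp.map_eq] at this
        simp only [add_sub_cancel_right] at this
        exact this.symm
    _ ≤ ∫⁻ y in T, C * ρ y ∂volume :=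
        setLIntegral_mono (hρ.const_mul C) fun y _ => hpt y
    _ = C * ∫⁻ y in T, ρ y ∂volume := lintegral_const_mul _ hρ
    _ = C * Measure.pi (fun _ : ι => laplaceMeasure b) T := by
        rw [hpi, withDensity_apply _ hT]

lemma indep_map_pi {Ω : Type*} [MeasurableSpace Ω] (μ : Measure Ω) [IsProbabilityMeasure μ]
    (η : ℕ × ℕ → Ω → ℝ) (hmeas : ∀ p, Measurable (η p))
    (hindep : iIndepFun η μ)
    (ν₀ : Measure ℝ) [IsProbabilityMeasure ν₀]
    (hlaw : ∀ p, μ.map (η p) = ν₀) (P : Finset (ℕ × ℕ)) :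
    μ.map (fun ω (p : {q // q ∈ P}) => η p.1 ω)
      = Measure.pi (fun _ : {q // q ∈ P} => ν₀) := by
  classical
  have hΦ : Measurable (fun ω (p : {q // q ∈ P}) => η p.1 ω) :=
    measurable_pi_lambda _ fun p => hmeas p.1
  refine (Measure.pi_eq fun s hs => ?_).symm
  rw [Measure.map_apply hΦ (MeasurableSet.univ_pi hs)]
  set sets : ℕ × ℕ → Set ℝ := fun q => if h : q ∈ P then s ⟨q, h⟩ else Set.univ
    with hsets
  have hsetm : ∀ q ∈ P, MeasurableSet (sets q) := by
    intro q hq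
    rw [hsets]
    beta_reduce
    rw [dif_pos hq]
    exact hs _
  have hpre : (fun ω (p : {q // q ∈ P}) => η p.1 ω) ⁻¹' (Set.univ.pi s)
      = ⋂ q ∈ P, η q ⁻¹' (sets q) := by
    ext ω
    simp only [Set.mem_preimage, Set.mem_univ_pi, Set.mem_iInter]
    constructor
    · intro h q hq
      rw [hsets]
      beta_reduce
      rw [dif_pos hq]
      exact h ⟨q, hq⟩
    · intro h p
      have h2 := h p.1 p.2
      rw [hsets] at h2
      beta_reduce at h2
      rw [dif_pos p.2] at h2
      exact h2
  rw [hpre, hindep.measure_inter_preimage_eq_mul P hsetm]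
  rw [← Finset.prod_attach P (fun q => μ (η q ⁻¹' sets q)), Finset.univ_eq_attach]
  refine Finset.prod_congr rfl fun p _ => ?_
  have h3 : sets p.1 = s p := by
    rw [hsets]
    beta_reduce
    rw [dif_pos p.2]
  rw [h3, ← hlaw p.1, Measure.map_apply (hmeas p.1) (hs p)]

theorem stmt12 {Ω : Type*} [MeasurableSpace Ω] (μ : Measure Ω) [IsProbabilityMeasure μ]
    (N L : ℕ) (hN : 1 ≤ N) (hL : L = Nat.clog 2 N)
    (ε : ℝ) (hε : 0 < ε)
    (η : ℕ × ℕ → Ω → ℝ) (hmeas : ∀ p, Measurable (η p))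
    (hindep : iIndepFun η μ)
    (hlaw : ∀ p, μ.map (η p) = laplaceMeasure ((((L + 1 + 1) / 2 : ℕ) : ℝ) / ε)) :
    ∀ x x' : Fin N → ℝ,
      (∀ i, x i ∈ Set.Icc (0 : ℝ) 1) → (∀ i, x' i ∈ Set.Icc (0 : ℝ) 1) →
      (∃ i0, ∀ j, j ≠ i0 → x j = x' j) →
      ∀ S : Set (Fin N → ℝ), MeasurableSet S →
        μ {ω | contMechanism N L x η ω ∈ S} ≤
          ENNReal.ofReal (Real.exp ε) * μ {ω | contMechanism N L x' η ω ∈ S} := by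
  intro x x' hx hx' hdiff S hS
  classical
  obtain ⟨i0, hd⟩ := hdiff
  set K : ℕ := (L + 1 + 1) / 2 with hKdef
  set b : ℝ := (K : ℝ) / ε with hbdef
  have hK1 : 1 ≤ K := by omega
  have hKpos : (0:ℝ) < (K:ℝ) := by exact_mod_cast hK1
  have hb : 0 < b := div_pos hKpos hε
  have hNL : N ≤ 2 ^ L := by rw [hL]; exact Nat.le_pow_clog one_lt_two N
  have hprob : IsProbabilityMeasure (laplaceMeasure b) := by
    have h := Measure.isProbabilityMeasure_map (μ := μ) ((hmeas (0,0)).aemeasurable)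
    rwa [hlaw (0,0)] at h
  set m : ℕ := (i0 : ℕ) with hmdef
  set c : ℝ := x i0 - x' i0 with hcdef
  have hc : |c| ≤ 1 := by
    have h1 := hx i0; have h2 := hx' i0
    rw [Set.mem_Icc] at h1 h2
    rw [hcdef, abs_le]
    constructor <;> linarith [h1.1, h1.2, h2.1, h2.2]
  have hm2L : m < 2 ^ L := lt_of_lt_of_le i0.2 hNL
  obtain ⟨v, w, hsum, hsupp, hbound⟩ := dyadic_decomp L m c hm2L
  set P : Finset (ℕ × ℕ) := (Finset.range (N+1)) ×ˢ (Finset.range (L+1)) with hPdef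
  have hmemP : ∀ (t : Fin N) (l : ℕ), l ∈ Finset.range (L+1) →
      (((t:ℕ)/2^l + 1, l) : ℕ×ℕ) ∈ P := by
    intro t l hl
    rw [hPdef, Finset.mem_product]
    refine ⟨Finset.mem_range.mpr ?_, hl⟩
    have h1 := Nat.div_le_self (t:ℕ) (2^l)
    have h2 := t.2
    omega
  set ext : ({q // q ∈ P} → ℝ) → ℕ × ℕ → ℝ :=
    fun y q => if h : q ∈ P then y ⟨q, h⟩ else 0 with hextdef
  have hextm : ∀ q, Measurable (fun y : {q // q ∈ P} → ℝ => ext y q) := by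
    intro q
    rw [hextdef]
    by_cases h : q ∈ P
    · simp only [dif_pos h]; exact measurable_pi_apply _
    · simp only [dif_neg h]; exact measurable_const
  set G : ({q // q ∈ P} → ℝ) → Fin N → ℝ :=
    fun y t => ∑ l ∈ Finset.range (L+1), ext y ((t:ℕ)/2^l + 1, l) with hGdef
  set sx : Fin N → ℝ :=
    fun t => ∑ i ∈ Finset.univ.filter (fun i : Fin N => i ≤ t), x i with hsxdef
  set sx' : Fin N → ℝ :=
    fun t => ∑ i ∈ Finset.univ.filter (fun i : Fin N => i ≤ t), x' i with hsx'def
  have hdd : ∀ t : Fin N, sx t = sx' t + (if m ≤ (t:ℕ) then c else 0) := by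
    intro t
    have hsub : sx t - sx' t
        = ∑ i ∈ Finset.univ.filter (fun i : Fin N => i ≤ t), (x i - x' i) := by
      rw [hsxdef, hsx'def]
      beta_reduce
      rw [Finset.sum_sub_distrib]
    by_cases hle : i0 ≤ t
    · have hmt : m ≤ (t:ℕ) := hle
      have hone : ∑ i ∈ Finset.univ.filter (fun i : Fin N => i ≤ t), (x i - x' i)
          = x i0 - x' i0 :=
        Finset.sum_eq_single_of_mem i0
          (Finset.mem_filter.mpr ⟨Finset.mem_univ _, hle⟩)
          (fun j _ hj => by rw [hd j hj]; ring)
      rw [if_pos hmt]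
      rw [hcdef]
      linarith [hsub, hone]
    · have hmt : ¬ m ≤ (t:ℕ) := hle
      have hzero : ∑ i ∈ Finset.univ.filter (fun i : Fin N => i ≤ t), (x i - x' i)
          = 0 :=
        Finset.sum_eq_zero fun j hj => by
          have hji : j ≠ i0 := by
            intro hji
            exact hle (hji ▸ (Finset.mem_filter.mp hj).2)
          rw [hd j hji]; ring
      rw [if_neg hmt]
      linarith [hsub, hzero]
  have hidx : ∀ (a l : ℕ), (a + 1 + 2^l - 1) / 2^l = a / 2^l + 1 := by
    intro a l
    have h2 : 1 ≤ 2^l := Nat.one_le_two_pow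
    have h1 : a + 1 + 2^l - 1 = a + 2^l := by omega
    rw [h1, Nat.add_div_right _ (by omega)]
  set Φ : Ω → ({q // q ∈ P} → ℝ) := fun ω p => η p.1 ω with hΦdef
  have hΦ : Measurable Φ := by
    rw [hΦdef]; exact measurable_pi_lambda _ fun p => hmeas p.1
  have hmap : μ.map Φ = Measure.pi (fun _ : {q // q ∈ P} => laplaceMeasure b) := by
    rw [hΦdef]
    exact indep_map_pi μ η hmeas hindep (laplaceMeasure b) hlaw P
  have hmechx : ∀ (z : Fin N → ℝ) (sz : Fin N → ℝ),
      (∀ t : Fin N, sz t = ∑ i ∈ Finset.univ.filter (fun i : Fin N => i ≤ t), z i) →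
      ∀ ω, contMechanism N L z η ω = fun t => sz t + G (Φ ω) t := by
    intro z sz hsz ω
    funext t
    simp only [contMechanism, hGdef, hΦdef, hextdef]
    rw [hsz t]
    congr 1
    refine Finset.sum_congr rfl fun l hl => ?_
    rw [hidx (t:ℕ) l, dif_pos (hmemP t l hl)]
  have hHm : ∀ sz : Fin N → ℝ,
      Measurable (fun y : {q // q ∈ P} → ℝ => (fun t => sz t + G y t)) := by
    intro sz
    apply measurable_pi_lambda
    intro t
    apply Measurable.const_add
    rw [hGdef]
    beta_reduce
    exact Finset.measurable_sum _ fun l _ => hextm _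
  have hTxm : MeasurableSet
      ((fun y : {q // q ∈ P} → ℝ => (fun t => sx t + G y t)) ⁻¹' S) := (hHm sx) hS
  have hTx'm : MeasurableSet
      ((fun y : {q // q ∈ P} → ℝ => (fun t => sx' t + G y t)) ⁻¹' S) := (hHm sx') hS
  have hμx : μ {ω | contMechanism N L x η ω ∈ S}
      = Measure.pi (fun _ : {q // q ∈ P} => laplaceMeasure b)
        ((fun y : {q // q ∈ P} → ℝ => (fun t => sx t + G y t)) ⁻¹' S) := by
    have e1 : {ω | contMechanism N L x η ω ∈ S}
        = Φ ⁻¹' ((fun y : {q // q ∈ P} → ℝ => (fun t => sx t + G y t)) ⁻¹' S) := by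
      ext ω
      simp only [Set.mem_setOf_eq, Set.mem_preimage]
      rw [hmechx x sx (fun t => by rw [hsxdef]) ω]
    rw [e1, ← Measure.map_apply hΦ hTxm, hmap]
  have hμx' : μ {ω | contMechanism N L x' η ω ∈ S}
      = Measure.pi (fun _ : {q // q ∈ P} => laplaceMeasure b)
        ((fun y : {q // q ∈ P} → ℝ => (fun t => sx' t + G y t)) ⁻¹' S) := by
    have e1 : {ω | contMechanism N L x' η ω ∈ S}
        = Φ ⁻¹' ((fun y : {q // q ∈ P} → ℝ => (fun t => sx' t + G y t)) ⁻¹' S) := by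
      ext ω
      simp only [Set.mem_setOf_eq, Set.mem_preimage]
      rw [hmechx x' sx' (fun t => by rw [hsx'def]) ω]
    rw [e1, ← Measure.map_apply hΦ hTx'm, hmap]
  set vres : {q // q ∈ P} → ℝ := fun p => v p.1 with hvresdef
  have hGadd : ∀ (y : {q // q ∈ P} → ℝ) (t : Fin N),
      G (y + vres) t = G y t + (if m ≤ (t:ℕ) then c else 0) := by
    intro y t
    rw [← hsum (t:ℕ) (lt_of_lt_of_le t.2 hNL)]
    simp only [hGdef, hextdef, hvresdef]
    rw [← Finset.sum_add_distrib]
    refine Finset.sum_congr rfl fun l hl => ?_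
    rw [dif_pos (hmemP t l hl), dif_pos (hmemP t l hl)]
    rfl
  have hshift : ((fun y : {q // q ∈ P} → ℝ => (fun t => sx t + G y t)) ⁻¹' S)
      = (fun y => y + vres) ⁻¹'
        ((fun y : {q // q ∈ P} → ℝ => (fun t => sx' t + G y t)) ⁻¹' S) := by
    ext y
    simp only [Set.mem_preimage]
    have hfun : (fun t => sx' t + G (y + vres) t) = (fun t => sx t + G y t) := by
      funext t
      rw [hGadd y t, hdd t]
      ring
    rw [hfun]
  have hsumP : (∑ p : {q // q ∈ P}, |vres p|) ≤ (K:ℝ) := by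
    have h0 : (∑ p : {q // q ∈ P}, |vres p|) = ∑ p ∈ P, |v p| := by
      rw [hvresdef, Finset.univ_eq_attach]
      beta_reduce
      exact Finset.sum_attach P (fun q => |v q|)
    have h1 : ∑ p ∈ P, |v p|
        = ∑ p ∈ P.filter (fun p => v p ≠ 0), |v p| :=
      (Finset.sum_filter_of_ne (fun p _ hp => by
        intro h0'
        apply hp
        rw [h0', abs_zero])).symm
    have h2 : P.filter (fun p => v p ≠ 0)
        ⊆ (Finset.range (L+1)).image (fun l => (w l, l)) := by
      intro p hp
      obtain ⟨hpP, hpv⟩ := Finset.mem_filter.mp hp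
      have hwl : p.1 = w p.2 := hsupp p.1 p.2 hpv
      have hl : p.2 ∈ Finset.range (L+1) := (Finset.mem_product.mp hpP).2
      refine Finset.mem_image.mpr ⟨p.2, hl, ?_⟩
      rw [← hwl]
    have h3 : ∑ p ∈ P.filter (fun p => v p ≠ 0), |v p|
        ≤ ∑ p ∈ (Finset.range (L+1)).image (fun l => (w l, l)), |v p| :=
      Finset.sum_le_sum_of_subset_of_nonneg h2 (fun p _ _ => abs_nonneg _)
    have h4 : ∑ p ∈ (Finset.range (L+1)).image (fun l => (w l, l)), |v p|
        = ∑ l ∈ Finset.range (L+1), |v (w l, l)| :=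
      Finset.sum_image (fun l1 _ l2 _ h => by
        have := (Prod.mk.injEq _ _ _ _).mp h
        exact this.2)
    have h5 : (((L+2)/2 : ℕ) : ℝ) = (K : ℝ) := by
      have hnat : ((L+2)/2 : ℕ) = K := by omega
      rw [hnat]
    calc (∑ p : {q // q ∈ P}, |vres p|) = ∑ p ∈ P, |v p| := h0
      _ = ∑ p ∈ P.filter (fun p => v p ≠ 0), |v p| := h1
      _ ≤ ∑ p ∈ (Finset.range (L+1)).image (fun l => (w l, l)), |v p| := h3
      _ = ∑ l ∈ Finset.range (L+1), |v (w l, l)| := h4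
      _ ≤ (((L+2)/2 : ℕ) : ℝ) * |c| := hbound
      _ = (K : ℝ) * |c| := by rw [h5]
      _ ≤ (K : ℝ) * 1 := by
          apply mul_le_mul_of_nonneg_left hc (le_of_lt hKpos)
      _ = (K : ℝ) := mul_one _
  calc μ {ω | contMechanism N L x η ω ∈ S}
      = Measure.pi (fun _ : {q // q ∈ P} => laplaceMeasure b)
        ((fun y : {q // q ∈ P} → ℝ => (fun t => sx t + G y t)) ⁻¹' S) := hμx
    _ = Measure.pi (fun _ : {q // q ∈ P} => laplaceMeasure b)
        ((fun y => y + vres) ⁻¹'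
          ((fun y : {q // q ∈ P} → ℝ => (fun t => sx' t + G y t)) ⁻¹' S)) := by
        rw [hshift]
    _ ≤ ENNReal.ofReal (Real.exp ((∑ p : {q // q ∈ P}, |vres p|) / b))
        * Measure.pi (fun _ : {q // q ∈ P} => laplaceMeasure b)
          ((fun y : {q // q ∈ P} → ℝ => (fun t => sx' t + G y t)) ⁻¹' S) :=
        pi_laplace_shift hb vres hTx'm
    _ ≤ ENNReal.ofReal (Real.exp ε)
        * Measure.pi (fun _ : {q // q ∈ P} => laplaceMeasure b)
          ((fun y : {q // q ∈ P} → ℝ => (fun t => sx' t + G y t)) ⁻¹' S) := by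
        apply mul_le_mul_left
        apply ENNReal.ofReal_le_ofReal
        apply Real.exp_le_exp.mpr
        have hKb : (K:ℝ) / b = ε := by
          rw [hbdef]
          field_simp
        calc (∑ p : {q // q ∈ P}, |vres p|) / b ≤ (K:ℝ) / b :=
              (div_le_div_iff_of_pos_right hb).mpr hsumP
          _ = ε := hKb
    _ = ENNReal.ofReal (Real.exp ε) * μ {ω | contMechanism N L x' η ω ∈ S} := by
        rw [hμx']
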